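/- Fix reals α, β with 0 ≤ α < 1 and β > 1. Let w be a word in the language 𝓛 of Σ and let c ∈ {0,…,ℓ}. Then the word wc obtained by appending the letter c to w belongs to 𝓛 if and only if a_{k₁(w)+1} ≤ c ≤ b_{k₂(w)+1}. -/

import Mathlib

noncomputable section

namespace IntermediateBeta

/-- The intermediate beta transformation `x ↦ βx + α mod 1`. -/
def F (α β : ℝ) (x : ℝ) : ℝ := Int.fract (β * x + α)

/-- The digit sequence of a point: `Om α β x n` is the index `i` with `F^[n] x ∈ J_i`.
For `y ∈ [0,1)` we have `y ∈ J_i ↔ ⌊β y + α⌋ = i`. -/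
def Om (α β : ℝ) (x : ℝ) : ℕ → ℕ := fun n => (⌊β * ((F α β)^[n] x) + α⌋).toNat

/-- `ℓ = ⌈α + β⌉ - 1`. -/
def ell (α β : ℝ) : ℕ := ⌈α + β⌉₊ - 1

/-- The subshift `Σ`: closure (in the product topology) of the set of digit sequences
of points of `[0,1)`. -/
def Sig (α β : ℝ) : Set (ℕ → ℕ) := closure (Om α β '' Set.Ico (0 : ℝ) 1)

/-- The shift map. -/
def shift (x : ℕ → ℕ) : ℕ → ℕ := fun n => x (n + 1)

/-- Lexicographic order on one-sided sequences. -/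
def lexLe (x y : ℕ → ℕ) : Prop := x = y ∨ ∃ k, (∀ i < k, x i = y i) ∧ x k < y k

/-- The language of a subset `S` of the full shift: the finite words occurring as
initial segments of elements of `S`. -/
def langOf (S : Set (ℕ → ℕ)) (w : List ℕ) : Prop :=
  ∃ x ∈ S, ∀ i : Fin w.length, x i = w.get i

/-- Membership in the language `𝓛` of the subshift `Σ`. -/
def inLang (α β : ℝ) (w : List ℕ) : Prop := langOf (Sig α β) w

/-- The tail segment of `w` of length `k` agrees with the initial segment of `s`
of length `k`. -/
def tailAgrees (s : ℕ → ℕ) (w : List ℕ) (k : ℕ) : Prop :=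
  k ≤ w.length ∧ ∀ i < k, w.getD (w.length - k + i) 0 = s i

/-- `kmax s w` is the length of the longest tail segment of `w` agreeing with an
initial segment of `s` (`k₁(w)` when `s = a`, `k₂(w)` when `s = b`). -/
def kmax (s : ℕ → ℕ) (w : List ℕ) : ℕ := sSup {k | tailAgrees s w k}

/-- `D a b` is the set of lengths `n` such that the initial segment of `b` of
length `n` occurs somewhere in `a`.  Thus `D a b` is the set `𝖣(a)` of the paper
and `D b a` is `𝖣(b)`. -/
def D (a b : ℕ → ℕ) : Set ℕ := {n | ∃ j, ∀ i < n, b i = a (j + i)}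

/-- Gluing of the words `w 0, v 0, w 1, v 1, …, v (n-1), w n`. -/
def glue {n : ℕ} (w : Fin (n + 1) → List ℕ) (v : Fin n → List ℕ) : List ℕ :=
  (List.ofFn fun i : Fin n => w i.castSucc ++ v i).flatten ++ w (Fin.last n)

/-- A collection `G` of words inside the language `lang` has specification: there
is `τ ∈ ℕ` such that any finite list of words of `G` can be glued, with gluing
words from `lang` of length `τ`, into a word of `lang`. -/
def HasSpec (lang G : List ℕ → Prop) : Prop :=
  ∃ τ : ℕ, 1 ≤ τ ∧ ∀ n : ℕ, ∀ w : Fin (n + 1) → List ℕ, (∀ i, G (w i)) →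
    ∃ v : Fin n → List ℕ, (∀ i, (v i).length = τ ∧ lang (v i)) ∧ lang (glue w v)

/-- The initial segment of a sequence, as a finite word. -/
def pre (s : ℕ → ℕ) (n : ℕ) : List ℕ := List.ofFn fun i : Fin n => s i

/-- Lexicographic order for finite words (of equal length). -/
def wordLe (u v : List ℕ) : Prop :=
  u = v ∨ ∃ k, (∀ i < k, u.getD i 0 = v.getD i 0) ∧ u.getD k 0 < v.getD k 0

/-- Concatenation of a finite word with an infinite sequence. -/
def wcat (w : List ℕ) (x : ℕ → ℕ) : ℕ → ℕ := fun n =>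
  if h : n < w.length then w.get ⟨n, h⟩ else x (n - w.length)
section Basic

variable (α β : ℝ)

/-- Left endpoint of `J d`. -/
def Lp (d : ℕ) : ℝ := (d - α) / β

/-- Right endpoint of `J d`. -/
def Rp (d : ℕ) : ℝ := (d + 1 - α) / β

/-- Left endpoint of the cylinder image. -/
def sb (w : List ℕ) : ℝ := w.foldl (fun x d => β * max x (Lp α β d) + α - d) 0

/-- Right endpoint of the cylinder image. -/
def tb (w : List ℕ) : ℝ := w.foldl (fun x d => β * min x (Rp α β d) + α - d) 1

/-- The set of points whose digit sequence starts with `w`. -/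
def E (w : List ℕ) : Set ℝ :=
  {y | y ∈ Set.Ico (0:ℝ) 1 ∧ ∀ i : Fin w.length, Om α β y i = w.get i}

/-- Left-continuous version of the map, acting on `(0,1]`. -/
def T (x : ℝ) : ℝ := β * x + α - (⌈β * x + α⌉ - 1)

/-- The lexicographically largest sequence: itinerary of `1⁻`. -/
def bseq (n : ℕ) : ℕ := (⌈β * ((T α β)^[n] 1) + α⌉ - 1).toNat

variable {α β}

lemma F_mem_Ico (x : ℝ) : F α β x ∈ Set.Ico (0:ℝ) 1 :=
  ⟨Int.fract_nonneg _, Int.fract_lt_one _⟩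

lemma iter_mem_Ico {x : ℝ} (hx : x ∈ Set.Ico (0:ℝ) 1) (n : ℕ) :
    (F α β)^[n] x ∈ Set.Ico (0:ℝ) 1 := by
  cases n with
  | zero => simpa using hx
  | succ n => rw [Function.iterate_succ_apply']; exact F_mem_Ico _

lemma digit_nonneg (hα0 : 0 ≤ α) (hβ : 1 < β) {x : ℝ} (hx : 0 ≤ x) :
    0 ≤ ⌊β * x + α⌋ := by
  have h0 : (0:ℝ) < β := lt_trans one_pos hβ
  have : (0:ℝ) ≤ β * x + α := by nlinarith
  exact Int.floor_nonneg.2 this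

lemma Om_cast (hα0 : 0 ≤ α) (hβ : 1 < β) {x : ℝ} (hx : x ∈ Set.Ico (0:ℝ) 1) (n : ℕ) :
    (Om α β x n : ℤ) = ⌊β * ((F α β)^[n] x) + α⌋ :=
  Int.toNat_of_nonneg (digit_nonneg hα0 hβ (iter_mem_Ico hx n).1)

lemma F_eq_of_digit (hα0 : 0 ≤ α) (hβ : 1 < β) {x : ℝ} (hx : x ∈ Set.Ico (0:ℝ) 1) {d : ℕ}
    (hd : Om α β x 0 = d) : F α β x = β * x + α - d := by
  have h2 : (d:ℤ) = ⌊β * x + α⌋ := hd ▸ (Om_cast hα0 hβ hx 0)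
  have h : ((d:ℤ):ℝ) = (⌊β * x + α⌋ : ℝ) := by exact_mod_cast h2
  have : F α β x = β * x + α - (⌊β * x + α⌋ : ℝ) := rfl
  rw [this, ← h]; push_cast; ring

lemma Om_shift (x : ℝ) (m n : ℕ) :
    Om α β x (m + n) = Om α β ((F α β)^[m] x) n := by
  unfold Om
  rw [Nat.add_comm m n, Function.iterate_add_apply]

lemma T_pos (x : ℝ) : 0 < T α β x := by
  have := Int.ceil_lt_add_one (β * x + α)
  unfold T; push_cast [Int.cast_sub] <;> linarith

lemma T_le_one (x : ℝ) : T α β x ≤ 1 := by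
  have := Int.le_ceil (β * x + α)
  unfold T; push_cast [Int.cast_sub] <;> linarith

lemma iterT_mem (n : ℕ) : (T α β)^[n] 1 ∈ Set.Ioc (0:ℝ) 1 := by
  cases n with
  | zero => simp
  | succ n => rw [Function.iterate_succ_apply']; exact ⟨T_pos _, T_le_one _⟩

lemma bseq_cast (hα0 : 0 ≤ α) (hβ : 1 < β) (n : ℕ) :
    (bseq α β n : ℤ) = ⌈β * ((T α β)^[n] 1) + α⌉ - 1 := by
  have h0 : (0:ℝ) < β := lt_trans one_pos hβ
  have h1 : (0:ℝ) < β * ((T α β)^[n] 1) + α := by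
    have := (iterT_mem (n := n) (α := α) (β := β)).1
    nlinarith
  have : (1:ℤ) ≤ ⌈β * ((T α β)^[n] 1) + α⌉ := Int.ceil_pos.2 h1
  exact Int.toNat_of_nonneg (by omega)

end Basic
section Cylinder

variable {α β : ℝ}

lemma sb_nil : sb α β [] = 0 := rfl
lemma tb_nil : tb α β [] = 1 := rfl

lemma sb_concat (w : List ℕ) (d : ℕ) :
    sb α β (w ++ [d]) = β * max (sb α β w) (Lp α β d) + α - d := by
  simp [sb, List.foldl_append]

lemma tb_concat (w : List ℕ) (d : ℕ) :
    tb α β (w ++ [d]) = β * min (tb α β w) (Rp α β d) + α - d := by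
  simp [tb, List.foldl_append]

lemma sb_nonneg (hβ : 1 < β) (w : List ℕ) : 0 ≤ sb α β w := by
  have h0 : (0:ℝ) < β := lt_trans one_pos hβ
  induction w using List.reverseRecOn with
  | nil => simp [sb_nil]
  | append_singleton w d ih =>
    rw [sb_concat]
    have h1 : Lp α β d ≤ max (sb α β w) (Lp α β d) := le_max_right _ _
    have h2 : β * Lp α β d = d - α := by rw [Lp]; field_simp
    nlinarith

lemma tb_le_one (hβ : 1 < β) (w : List ℕ) : tb α β w ≤ 1 := by
  have h0 : (0:ℝ) < β := lt_trans one_pos hβ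
  induction w using List.reverseRecOn with
  | nil => simp [tb_nil]
  | append_singleton w d ih =>
    rw [tb_concat]
    have h1 : min (tb α β w) (Rp α β d) ≤ Rp α β d := min_le_right _ _
    have h2 : β * Rp α β d = d + 1 - α := by rw [Rp]; field_simp
    nlinarith

lemma mem_E_concat {y : ℝ} {w : List ℕ} {d : ℕ} :
    y ∈ E α β (w ++ [d]) ↔ y ∈ E α β w ∧ Om α β y w.length = d := by
  constructor
  · rintro ⟨hy, hfit⟩
    refine ⟨⟨hy, fun i => ?_⟩, ?_⟩
    · have := hfit ⟨i, by simp⟩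
      simpa [List.get_eq_getElem, List.getElem_append_left] using this
    · have := hfit ⟨w.length, by simp⟩
      simpa [List.get_eq_getElem] using this
  · rintro ⟨⟨hy, hfit⟩, hd⟩
    refine ⟨hy, fun i => ?_⟩
    rcases Nat.lt_succ_iff_lt_or_eq.1 (by simpa using i.isLt) with h | h
    · have := hfit ⟨i, h⟩
      simpa [List.get_eq_getElem, List.getElem_append_left h] using this
    · simp [List.get_eq_getElem, h]
      exact hd

lemma E_image (hα0 : 0 ≤ α) (hβ : 1 < β) {w : List ℕ} {y : ℝ} (hy : y ∈ E α β w) :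
    (F α β)^[w.length] y ∈ Set.Ico (sb α β w) (tb α β w) := by
  have h0 : (0:ℝ) < β := lt_trans one_pos hβ
  induction w using List.reverseRecOn with
  | nil => simpa [sb_nil, tb_nil] using hy.1
  | append_singleton w d ih =>
    rcases mem_E_concat.1 hy with ⟨hyw, hd⟩
    have hz := ih hyw
    set z := (F α β)^[w.length] y with hzdef
    have hz01 : z ∈ Set.Ico (0:ℝ) 1 := iter_mem_Ico hyw.1 _
    have hcast : ((d:ℤ):ℝ) = (⌊β * z + α⌋ : ℝ) := by
      have h := Om_cast hα0 hβ hyw.1 w.length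
      rw [hd] at h
      exact_mod_cast h
    have hdl : (d:ℝ) ≤ β * z + α := by
      have := Int.floor_le (β * z + α); rw [← hcast] at this; push_cast at this; linarith
    have hdu : β * z + α < d + 1 := by
      have := Int.lt_floor_add_one (β * z + α); rw [← hcast] at this; push_cast at this
      linarith
    have hlen : (w ++ [d]).length = w.length + 1 := by simp
    have hF : (F α β)^[(w ++ [d]).length] y = β * z + α - d := by
      rw [hlen, Function.iterate_succ_apply', ← hzdef]
      refine F_eq_of_digit hα0 hβ hz01 ?_
      have : Om α β y w.length = Om α β z 0 := by
        simpa using Om_shift y w.length 0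
      rw [← this]; exact hd
    rw [hF, sb_concat, tb_concat]
    constructor
    · have h1 : max (sb α β w) (Lp α β d) ≤ z := by
        refine max_le hz.1 ?_
        rw [Lp, div_le_iff₀ h0]; linarith
      nlinarith
    · have h2 : z < min (tb α β w) (Rp α β d) := by
        refine lt_min hz.2 ?_
        rw [Rp, lt_div_iff₀ h0]; linarith
      nlinarith

lemma E_surj (hα0 : 0 ≤ α) (hβ : 1 < β) {w : List ℕ} {z : ℝ}
    (hz : z ∈ Set.Ico (sb α β w) (tb α β w)) :
    ∃ y ∈ E α β w, (F α β)^[w.length] y = z := by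
  have h0 : (0:ℝ) < β := lt_trans one_pos hβ
  induction w using List.reverseRecOn generalizing z with
  | nil =>
    refine ⟨z, ⟨?_, fun i => absurd i.isLt (by simp)⟩, rfl⟩
    simpa [sb_nil, tb_nil] using hz
  | append_singleton w d ih =>
    rw [sb_concat, tb_concat] at hz
    set z' := (z - α + d) / β with hz'def
    have hz'l : max (sb α β w) (Lp α β d) ≤ z' := by
      rw [hz'def, le_div_iff₀ h0]
      have := hz.1; nlinarith [le_max_left (sb α β w) (Lp α β d)]
    have hz'u : z' < min (tb α β w) (Rp α β d) := by
      rw [hz'def, div_lt_iff₀ h0]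
      have := hz.2; nlinarith [min_le_left (tb α β w) (Rp α β d)]
    have hz'mem : z' ∈ Set.Ico (sb α β w) (tb α β w) :=
      ⟨le_trans (le_max_left _ _) hz'l, lt_of_lt_of_le hz'u (min_le_left _ _)⟩
    obtain ⟨y, hy, hFy⟩ := ih hz'mem
    have hz01 : z ∈ Set.Ico (0:ℝ) 1 := by
      constructor
      · have := sb_nonneg (α := α) hβ (w ++ [d]); rw [sb_concat] at this; linarith [hz.1]
      · have := tb_le_one (α := α) hβ (w ++ [d]); rw [tb_concat] at this; linarith [hz.2]
    have hβz' : β * z' + α = z + d := by rw [hz'def]; field_simp; ring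
    have hfloor : ⌊β * z' + α⌋ = d := by
      rw [hβz']
      have : ⌊z + (d:ℝ)⌋ = ⌊z⌋ + d := by exact_mod_cast Int.floor_add_intCast z d
      rw [this, Int.floor_eq_zero_iff.2 hz01]; simp
    have hdig : Om α β y w.length = d := by
      have h1 : Om α β y w.length = Om α β z' 0 := by
        have := Om_shift (α := α) (β := β) y w.length 0
        simpa [hFy] using this
      rw [h1]; unfold Om; simp [hfloor]
    refine ⟨y, mem_E_concat.2 ⟨hy, hdig⟩, ?_⟩
    have hlen : (w ++ [d]).length = w.length + 1 := by simp
    rw [hlen, Function.iterate_succ_apply', hFy]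
    have hz'01 : z' ∈ Set.Ico (0:ℝ) 1 := by
      constructor
      · exact le_trans (sb_nonneg hβ w) hz'mem.1
      · exact lt_of_lt_of_le hz'mem.2 (tb_le_one hβ w)
    have : Om α β z' 0 = d := by unfold Om; simp [hfloor]
    rw [F_eq_of_digit hα0 hβ hz'01 this, hβz']; ring

lemma E_nonempty_iff (hα0 : 0 ≤ α) (hβ : 1 < β) {w : List ℕ} :
    (E α β w).Nonempty ↔ sb α β w < tb α β w := by
  constructor
  · rintro ⟨y, hy⟩
    have := E_image hα0 hβ hy
    exact lt_of_le_of_lt this.1 this.2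
  · intro h
    obtain ⟨y, hy, -⟩ := E_surj hα0 hβ (z := sb α β w) ⟨le_refl _, h⟩
    exact ⟨y, hy⟩

lemma inLang_iff (hα0 : 0 ≤ α) (hβ : 1 < β) {w : List ℕ} :
    inLang α β w ↔ (E α β w).Nonempty := by
  constructor
  · rintro ⟨x, hx, hfit⟩
    set U : Set (ℕ → ℕ) := ⋂ i : Fin w.length, (fun z : ℕ → ℕ => z i) ⁻¹' {x i} with hU
    have hUopen : IsOpen U :=
      isOpen_iInter_of_finite fun i => (continuous_apply (i:ℕ)).isOpen_preimage _ (isOpen_discrete _)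
    have hxU : x ∈ U := by simp [hU]
    obtain ⟨z, hzU, y, hy, hzy⟩ := _root_.mem_closure_iff.1 hx U hUopen hxU
    refine ⟨y, ⟨hy, fun i => ?_⟩⟩
    have : z i = x i := by
      have := Set.mem_iInter.1 hzU i; simpa using this
    rw [← hzy] at this
    rw [this, hfit i]
  · rintro ⟨y, hy, hfit⟩
    exact ⟨Om α β y, subset_closure ⟨y, hy, rfl⟩, hfit⟩

end Cylinder
section Lex

variable {α β : ℝ}

lemma Om_toNat_le (hα0 : 0 ≤ α) (hβ : 1 < β) {u v : ℝ} (hu : u ∈ Set.Ico (0:ℝ) 1)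
    (huv : u ≤ v) : Om α β u 0 ≤ Om α β v 0 := by
  have : ⌊β * u + α⌋ ≤ ⌊β * v + α⌋ := by
    apply Int.floor_le_floor
    have h0 : (0:ℝ) < β := lt_trans one_pos hβ
    nlinarith
  exact Int.toNat_le_toNat this

lemma iter_mono (hα0 : 0 ≤ α) (hβ : 1 < β) {x y : ℝ} (hx : x ∈ Set.Ico (0:ℝ) 1)
    (hy : y ∈ Set.Ico (0:ℝ) 1) (hxy : x ≤ y) :
    ∀ n, (∀ i < n, Om α β x i = Om α β y i) → (F α β)^[n] x ≤ (F α β)^[n] y := by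
  intro n
  induction n with
  | zero => intro _; simpa using hxy
  | succ n ih =>
    intro h
    have hle : (F α β)^[n] x ≤ (F α β)^[n] y := ih fun i hi => h i (Nat.lt_succ_of_lt hi)
    have hd : Om α β x n = Om α β y n := h n (Nat.lt_succ_self n)
    set d := Om α β y n with hddef
    have hux : (F α β)^[n] x ∈ Set.Ico (0:ℝ) 1 := iter_mem_Ico hx n
    have huy : (F α β)^[n] y ∈ Set.Ico (0:ℝ) 1 := iter_mem_Ico hy n
    have ex : Om α β ((F α β)^[n] x) 0 = d := by rw [← Om_shift]; simpa using hd
    have ey : Om α β ((F α β)^[n] y) 0 = d := by rw [← Om_shift]; simp [hddef]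
    rw [Function.iterate_succ_apply', Function.iterate_succ_apply',
      F_eq_of_digit hα0 hβ hux ex, F_eq_of_digit hα0 hβ huy ey]
    have h0 : (0:ℝ) < β := lt_trans one_pos hβ
    nlinarith

lemma Om_mono (hα0 : 0 ≤ α) (hβ : 1 < β) {x y : ℝ} (hx : x ∈ Set.Ico (0:ℝ) 1)
    (hy : y ∈ Set.Ico (0:ℝ) 1) (hxy : x ≤ y) (n : ℕ)
    (h : ∀ i < n, Om α β x i = Om α β y i) : Om α β x n ≤ Om α β y n := by
  have hle := iter_mono hα0 hβ hx hy hxy n h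
  have h2 := Om_toNat_le hα0 hβ (iter_mem_Ico hx n) hle
  rw [← Om_shift x n 0, ← Om_shift y n 0] at h2
  simpa using h2

/-- `a` is below all shifts of itself. -/
lemma a_self_min (hα0 : 0 ≤ α) (hβ : 1 < β) (m j : ℕ)
    (h : ∀ i < j, Om α β 0 i = Om α β 0 (m + i)) :
    Om α β 0 j ≤ Om α β 0 (m + j) := by
  have h0 : (0:ℝ) ∈ Set.Ico (0:ℝ) 1 := ⟨le_refl _, one_pos⟩
  have hFm : (F α β)^[m] 0 ∈ Set.Ico (0:ℝ) 1 := iter_mem_Ico h0 m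
  have := Om_mono hα0 hβ h0 hFm hFm.1 j (fun i hi => by
    rw [← Om_shift]; exact h i hi)
  rw [← Om_shift] at this
  exact this

/-- Comparison with the top itinerary `bseq`. -/
lemma iter_lt_T (hα0 : 0 ≤ α) (hβ : 1 < β) {x : ℝ} (hx : x ∈ Set.Ico (0:ℝ) 1) :
    ∀ n, (∀ i < n, Om α β x i = bseq α β i) → (F α β)^[n] x < (T α β)^[n] 1 := by
  intro n
  induction n with
  | zero => simpa using hx.2
  | succ n ih =>
    intro h
    have hlt : (F α β)^[n] x < (T α β)^[n] 1 := ih fun i hi => h i (Nat.lt_succ_of_lt hi)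
    set u := (F α β)^[n] x with hudef
    set q := (T α β)^[n] 1 with hqdef
    have hd : Om α β x n = bseq α β n := h n (Nat.lt_succ_self n)
    have hux : u ∈ Set.Ico (0:ℝ) 1 := iter_mem_Ico hx n
    have ex : Om α β u 0 = bseq α β n := by rw [← Om_shift]; simpa using hd
    have hceil : ((bseq α β n : ℤ) : ℝ) = (⌈β * q + α⌉ : ℝ) - 1 := by
      exact_mod_cast congrArg (fun t : ℤ => (t : ℝ)) (bseq_cast hα0 hβ n)
    have hT : (T α β)^[n+1] 1 = β * q + α - bseq α β n := by
      rw [Function.iterate_succ_apply', ← hqdef]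
      unfold T
      push_cast
      push_cast at hceil
      linarith
    rw [Function.iterate_succ_apply', ← hudef, F_eq_of_digit hα0 hβ hux ex, hT]
    have h0 : (0:ℝ) < β := lt_trans one_pos hβ
    nlinarith

lemma Om_le_bseq (hα0 : 0 ≤ α) (hβ : 1 < β) {x : ℝ} (hx : x ∈ Set.Ico (0:ℝ) 1)
    (n : ℕ) (h : ∀ i < n, Om α β x i = bseq α β i) : Om α β x n ≤ bseq α β n := by
  have hlt := iter_lt_T hα0 hβ hx n h
  have hfl : ⌊β * ((F α β)^[n] x) + α⌋ ≤ ⌈β * ((T α β)^[n] 1) + α⌉ - 1 := by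
    have h0 : (0:ℝ) < β := lt_trans one_pos hβ
    have h1 : (⌊β * ((F α β)^[n] x) + α⌋ : ℝ) < (⌈β * ((T α β)^[n] 1) + α⌉ : ℝ) := by
      calc (⌊β * ((F α β)^[n] x) + α⌋ : ℝ) ≤ β * ((F α β)^[n] x) + α := Int.floor_le _
        _ < β * ((T α β)^[n] 1) + α := by nlinarith
        _ ≤ (⌈β * ((T α β)^[n] 1) + α⌉ : ℝ) := Int.le_ceil _
    have : ⌊β * ((F α β)^[n] x) + α⌋ < ⌈β * ((T α β)^[n] 1) + α⌉ := by exact_mod_cast h1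
    omega
  have := Int.toNat_le_toNat hfl
  unfold Om bseq
  exact this

lemma lexLe_elim {x y : ℕ → ℕ} (h : lexLe x y) {j : ℕ} (hj : ∀ i < j, y i = x i) :
    x j ≤ y j := by
  rcases h with rfl | ⟨k, hk, hlt⟩
  · exact le_refl _
  · rcases lt_trichotomy j k with hjk | rfl | hjk
    · exact le_of_eq (hk j hjk)
    · exact le_of_lt hlt
    · exact absurd (hj k hjk) (by omega)

lemma lexLe_antisymm {x y : ℕ → ℕ} (h1 : lexLe x y) (h2 : lexLe y x) : x = y := by
  rcases h1 with rfl | ⟨k, hk, hklt⟩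
  · rfl
  rcases h2 with rfl | ⟨m, hm, hmlt⟩
  · rfl
  exfalso
  rcases lt_trichotomy k m with h | rfl | h
  · exact absurd (hm k h) (by omega)
  · omega
  · exact absurd (hk m h) (by omega)

lemma lexLe_of_pointwise {x y : ℕ → ℕ} (h : ∀ j, (∀ i < j, y i = x i) → x j ≤ y j) :
    lexLe x y := by
  by_cases heq : x = y
  · exact Or.inl heq
  · have hne : ∃ n, x n ≠ y n := by
      by_contra hc
      push_neg at hc
      exact heq (funext hc)
    have hfind := Nat.find_spec hne
    set n := Nat.find hne with hn
    refine Or.inr ⟨n, fun i hi => ?_, ?_⟩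
    · by_contra hne2
      exact absurd (Nat.find_min hne hi) (by simpa using hne2)
    · have hag : ∀ i < n, y i = x i := fun i hi => by
        have := Nat.find_min hne hi
        simpa using (by
          by_contra hc
          exact this (fun hcc => hc hcc.symm) : y i = x i)
      exact lt_of_le_of_ne (h n hag) hfind

lemma isClosed_lexLe_le (bb : ℕ → ℕ) : IsClosed {y : ℕ → ℕ | lexLe y bb} := by
  rw [← isOpen_compl_iff]
  rw [isOpen_iff_mem_nhds]
  intro y hy
  simp only [Set.mem_compl_iff, Set.mem_setOf_eq] at hy
  have hne : ∃ n, y n ≠ bb n := by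
    by_contra hc
    push_neg at hc
    exact hy (Or.inl (funext hc))
  set n := Nat.find hne with hn
  have hag : ∀ i < n, y i = bb i := fun i hi => by
    have := Nat.find_min hne hi
    by_contra hc
    exact this hc
  have hgt : bb n < y n := by
    rcases lt_trichotomy (y n) (bb n) with h | h | h
    · exact absurd (Or.inr ⟨n, hag, h⟩) hy
    · exact absurd h (Nat.find_spec hne)
    · exact h
  have hU : IsOpen (⋂ i : Fin (n+1), (fun z : ℕ → ℕ => z i) ⁻¹' {y i}) :=
    isOpen_iInter_of_finite fun i => (continuous_apply (i:ℕ)).isOpen_preimage _ (isOpen_discrete _)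
  refine Filter.mem_of_superset (hU.mem_nhds (by simp)) ?_
  intro z hz
  simp only [Set.mem_iInter, Set.mem_preimage, Set.mem_singleton_iff] at hz
  have hzy : ∀ i ≤ n, z i = y i := fun i hi => hz ⟨i, by omega⟩
  simp only [Set.mem_compl_iff, Set.mem_setOf_eq]
  intro hcon
  rcases hcon with rfl | ⟨k, hk, hklt⟩
  · exact absurd (hzy n (le_refl n)) (by omega)
  · rcases lt_trichotomy k n with h | rfl | h
    · have h1 : z k = y k := hzy k (le_of_lt h)
      have h2 : y k = bb k := hag k h
      omega
    · have h2 : z n = y n := hzy n (le_refl _)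
      omega
    · have h1 : z n = bb n := hk n h
      have h2 : z n = y n := hzy n (le_refl _)
      omega

lemma shift_Om (x : ℝ) : shift (Om α β x) = Om α β (F α β x) := by
  funext n
  have := Om_shift (α := α) (β := β) x 1 n
  simpa [shift, Nat.add_comm] using this

lemma shift_mem_Sig {x : ℕ → ℕ} (hx : x ∈ Sig α β) : shift x ∈ Sig α β := by
  have hcont : Continuous (shift : (ℕ → ℕ) → (ℕ → ℕ)) :=
    continuous_pi fun n => continuous_apply (n + 1)
  have h1 : shift x ∈ closure (shift '' (Om α β '' Set.Ico (0:ℝ) 1)) :=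
    image_closure_subset_closure_image hcont ⟨x, hx, rfl⟩
  refine closure_mono ?_ h1
  rintro - ⟨-, ⟨y, hy, rfl⟩, rfl⟩
  exact ⟨F α β y, F_mem_Ico y, (shift_Om y).symm⟩

lemma shift_iterate (x : ℕ → ℕ) (m : ℕ) : shift^[m] x = fun n => x (n + m) := by
  induction m with
  | zero => simp
  | succ m ih =>
    funext n
    rw [Function.iterate_succ_apply', ih]
    simp [shift]
    congr 1
    omega

lemma shift_iter_mem_Sig {x : ℕ → ℕ} (hx : x ∈ Sig α β) (m : ℕ) : shift^[m] x ∈ Sig α β := by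
  induction m with
  | zero => simpa using hx
  | succ m ih => rw [Function.iterate_succ_apply']; exact shift_mem_Sig ih

end Lex
section Bseq

variable {α β : ℝ}

lemma pre_length (s : ℕ → ℕ) (n : ℕ) : (pre s n).length = n := by simp [pre]

lemma pre_succ (s : ℕ → ℕ) (n : ℕ) : pre s (n+1) = pre s n ++ [s n] := by
  rw [pre, List.ofFn_succ']
  simp [pre, List.concat_eq_append]

lemma Epre (hα0 : 0 ≤ α) (hβ : 1 < β) : ∀ n : ℕ,
    sb α β (pre (bseq α β) n) < tb α β (pre (bseq α β) n) ∧
      tb α β (pre (bseq α β) n) = (T α β)^[n] 1 := by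
  have h0 : (0:ℝ) < β := lt_trans one_pos hβ
  intro n
  induction n with
  | zero => simp [pre, sb_nil, tb_nil]
  | succ n ih =>
    obtain ⟨ih1, ih2⟩ := ih
    have hcd : ((bseq α β n : ℝ)) = (⌈β * ((T α β)^[n] 1) + α⌉ : ℝ) - 1 := by
      have := bseq_cast (α := α) (β := β) hα0 hβ n
      have h2 : ((bseq α β n : ℤ) : ℝ) = ((⌈β * ((T α β)^[n] 1) + α⌉ - 1 : ℤ) : ℝ) := by
        exact_mod_cast congrArg (fun t : ℤ => (t:ℝ)) this
      push_cast at h2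
      exact_mod_cast h2
    have hqu : β * ((T α β)^[n] 1) + α ≤ (bseq α β n : ℝ) + 1 := by
      have := Int.le_ceil (β * ((T α β)^[n] 1) + α); linarith
    have hql : (bseq α β n : ℝ) < β * ((T α β)^[n] 1) + α := by
      have := Int.ceil_lt_add_one (β * ((T α β)^[n] 1) + α); linarith
    have hqR : (T α β)^[n] 1 ≤ Rp α β (bseq α β n) := by
      rw [Rp, le_div_iff₀ h0]; linarith
    have hT1 : (T α β)^[n+1] 1 = β * ((T α β)^[n] 1) + α - bseq α β n := by
      rw [Function.iterate_succ_apply']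
      have : T α β ((T α β)^[n] 1) =
          β * ((T α β)^[n] 1) + α - (⌈β * ((T α β)^[n] 1) + α⌉ - 1) := rfl
      rw [this]; push_cast; linarith
    have htb : tb α β (pre (bseq α β) (n+1)) = (T α β)^[n+1] 1 := by
      rw [pre_succ, tb_concat, ih2, min_eq_left hqR, hT1]
    refine ⟨?_, htb⟩
    rw [htb, pre_succ, sb_concat, hT1]
    have hmax : max (sb α β (pre (bseq α β) n)) (Lp α β (bseq α β n)) < (T α β)^[n] 1 := by
      apply max_lt (by rw [← ih2]; exact ih1)
      rw [Lp, div_lt_iff₀ h0]; linarith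
    nlinarith

lemma bseq_mem_Sig (hα0 : 0 ≤ α) (hβ : 1 < β) : bseq α β ∈ Sig α β := by
  have hne : ∀ n, ∃ y, y ∈ E α β (pre (bseq α β) n) := fun n =>
    E_nonempty_iff hα0 hβ |>.2 (Epre hα0 hβ n).1
  choose y hy using hne
  have h1 : Filter.Tendsto (fun n => Om α β (y n)) Filter.atTop (nhds (bseq α β)) := by
    rw [tendsto_pi_nhds]
    intro i
    refine tendsto_atTop_of_eventually_const (i₀ := i + 1) fun n hn => ?_
    have := (hy n).2 ⟨i, by simpa [pre_length] using hn⟩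
    simpa [pre, List.get_eq_getElem] using this
  exact mem_closure_of_tendsto h1
    (Filter.Eventually.of_forall fun n => ⟨y n, (hy n).1, rfl⟩)

lemma Sig_le_bseq (hα0 : 0 ≤ α) (hβ : 1 < β) {z : ℕ → ℕ} (hz : z ∈ Sig α β) :
    lexLe z (bseq α β) := by
  have hsub : Om α β '' Set.Ico (0:ℝ) 1 ⊆ {y : ℕ → ℕ | lexLe y (bseq α β)} := by
    rintro - ⟨x, hx, rfl⟩
    exact lexLe_of_pointwise fun j hag =>
      Om_le_bseq hα0 hβ hx j fun i hi => (hag i hi).symm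
  exact closure_minimal hsub (isClosed_lexLe_le _) hz

lemma b_eq_bseq (hα0 : 0 ≤ α) (hβ : 1 < β) {b : ℕ → ℕ} (hb : b ∈ Sig α β)
    (hbsup : ∀ y ∈ Sig α β, lexLe y b) : b = bseq α β :=
  lexLe_antisymm (Sig_le_bseq hα0 hβ hb) (hbsup _ (bseq_mem_Sig hα0 hβ))

lemma bseq_self_max (hα0 : 0 ≤ α) (hβ : 1 < β) (m j : ℕ)
    (h : ∀ i < j, bseq α β i = bseq α β (m + i)) :
    bseq α β (m + j) ≤ bseq α β j := by
  have hsh := Sig_le_bseq hα0 hβ (shift_iter_mem_Sig (bseq_mem_Sig hα0 hβ) m)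
  rw [shift_iterate] at hsh
  have h2 := lexLe_elim hsh (j := j) fun i hi => by
    have := h i hi
    rw [Nat.add_comm m i] at this
    exact this
  have h3 : bseq α β (j + m) ≤ bseq α β j := h2
  rw [Nat.add_comm m j]
  exact h3

end Bseq

section Kmax

lemma tailAgrees_zero (s : ℕ → ℕ) (w : List ℕ) : tailAgrees s w 0 :=
  ⟨Nat.zero_le _, fun i hi => absurd hi (Nat.not_lt_zero i)⟩

lemma tailAgrees_mem_zero (s : ℕ → ℕ) (w : List ℕ) :
    (0:ℕ) ∈ {k | tailAgrees s w k} := tailAgrees_zero s w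

lemma tailAgrees_bdd {s : ℕ → ℕ} {w : List ℕ} :
    BddAbove {k | tailAgrees s w k} := ⟨w.length, fun _ hk => hk.1⟩

lemma kmax_tailAgrees (s : ℕ → ℕ) (w : List ℕ) : tailAgrees s w (kmax s w) :=
  Nat.sSup_mem ⟨0, tailAgrees_mem_zero s w⟩ tailAgrees_bdd

lemma le_kmax {s : ℕ → ℕ} {w : List ℕ} {j : ℕ} (h : tailAgrees s w j) :
    j ≤ kmax s w := le_csSup tailAgrees_bdd h

lemma getD_concat_lt {w : List ℕ} {d i : ℕ} (h : i < w.length) :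
    (w ++ [d]).getD i 0 = w.getD i 0 := by
  have h1 : i < (w ++ [d]).length := by
    simp only [List.length_append, List.length_singleton]; omega
  rw [List.getD_eq_getElem _ _ h1, List.getD_eq_getElem _ _ h]
  exact List.getElem_append_left h

lemma getD_concat_len {w : List ℕ} {d : ℕ} : (w ++ [d]).getD w.length 0 = d := by
  rw [List.getD_eq_getElem _ _ (by simp)]
  simp

lemma tailAgrees_concat {s : ℕ → ℕ} {w : List ℕ} {d k : ℕ}
    (h : tailAgrees s (w ++ [d]) (k+1)) : tailAgrees s w k ∧ d = s k := by
  obtain ⟨hlen, hag⟩ := h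
  simp only [List.length_append, List.length_singleton] at hlen
  have hkn : k ≤ w.length := by omega
  constructor
  · refine ⟨hkn, fun i hi => ?_⟩
    have h2 := hag i (by omega)
    rw [show (w ++ [d]).length - (k+1) + i = w.length - k + i by
      simp only [List.length_append, List.length_singleton]; omega] at h2
    rw [← h2, getD_concat_lt (by omega)]
  · have h2 := hag k (by omega)
    rw [show (w ++ [d]).length - (k+1) + k = w.length by
      simp only [List.length_append, List.length_singleton]; omega] at h2
    rw [← h2, getD_concat_len]

lemma tailAgrees_concat' {s : ℕ → ℕ} {w : List ℕ} {d k : ℕ}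
    (h1 : tailAgrees s w k) (h2 : d = s k) : tailAgrees s (w ++ [d]) (k+1) := by
  obtain ⟨hlen, hag⟩ := h1
  refine ⟨by simp only [List.length_append, List.length_singleton]; omega,
    fun i hi => ?_⟩
  rcases Nat.lt_succ_iff_lt_or_eq.1 hi with hik | hik
  · rw [show (w ++ [d]).length - (k+1) + i = w.length - k + i by
      simp only [List.length_append, List.length_singleton]; omega,
      getD_concat_lt (by omega)]
    exact hag i hik
  · subst hik
    rw [show (w ++ [d]).length - (i+1) + i = w.length by
      simp only [List.length_append, List.length_singleton]; omega, getD_concat_len]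
    exact h2

lemma kmax_concat_eq {s : ℕ → ℕ} {w : List ℕ} {d : ℕ} (h : d = s (kmax s w)) :
    kmax s (w ++ [d]) = kmax s w + 1 := by
  apply le_antisymm
  · apply csSup_le ⟨0, tailAgrees_mem_zero s _⟩
    intro j hj
    cases j with
    | zero => omega
    | succ k =>
      obtain ⟨h1, -⟩ := tailAgrees_concat hj
      have := le_kmax h1
      omega
  · exact le_kmax (tailAgrees_concat' (kmax_tailAgrees s w) h)

lemma kmax_concat_zero {s : ℕ → ℕ} {w : List ℕ} {d : ℕ}
    (h : ∀ k, tailAgrees s (w ++ [d]) (k+1) → False) : kmax s (w ++ [d]) = 0 := by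
  apply Nat.le_zero.1
  apply csSup_le ⟨0, tailAgrees_mem_zero s _⟩
  intro j hj
  cases j with
  | zero => omega
  | succ k => exact absurd hj (h k)

lemma tail_overlap {s : ℕ → ℕ} {w : List ℕ} {d k' : ℕ}
    (hta : tailAgrees s (w ++ [d]) (k'+1)) (hne : d ≠ s (kmax s w)) :
    1 ≤ kmax s w - k' ∧ (∀ i < k', s i = s ((kmax s w - k') + i)) ∧
      (kmax s w - k') + k' = kmax s w ∧ d = s k' := by
  obtain ⟨⟨hk'n, hag'⟩, hd⟩ := tailAgrees_concat hta
  obtain ⟨hKn, hKag⟩ := kmax_tailAgrees s w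
  have hk'K : k' ≤ kmax s w := le_kmax ⟨hk'n, hag'⟩
  have hm : 1 ≤ kmax s w - k' := by
    rcases Nat.lt_or_ge k' (kmax s w) with hlt | hge
    · omega
    · exact absurd (by rw [show kmax s w = k' by omega]; exact hd) hne
  refine ⟨hm, fun i hi => ?_, by omega, hd⟩
  have h1 := hKag ((kmax s w - k') + i) (by omega)
  have h2 := hag' i hi
  rw [show w.length - kmax s w + (kmax s w - k' + i) = w.length - k' + i by omega] at h1
  rw [h2] at h1
  exact h1

end Kmax
section Endpoints

variable {α β : ℝ}

lemma kmax_nil (s : ℕ → ℕ) : kmax s [] = 0 := by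
  apply Nat.le_zero.1
  apply csSup_le ⟨0, tailAgrees_mem_zero s []⟩
  intro j hj
  simpa using hj.1

lemma s_eq (hα0 : 0 ≤ α) (hβ : 1 < β) {w : List ℕ} (h : sb α β w < tb α β w) :
    sb α β w = (F α β)^[kmax (Om α β 0) w] 0 := by
  have h0 : (0:ℝ) < β := lt_trans one_pos hβ
  have h01 : (0:ℝ) ∈ Set.Ico (0:ℝ) 1 := ⟨le_refl _, one_pos⟩
  induction w using List.reverseRecOn with
  | nil => simp [sb_nil, kmax_nil]
  | append_singleton w d ih =>
    have hmm : max (sb α β w) (Lp α β d) < min (tb α β w) (Rp α β d) := by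
      rw [sb_concat, tb_concat] at h
      exact lt_of_mul_lt_mul_left (by linarith) h0.le
    have hst : sb α β w < tb α β w :=
      lt_of_le_of_lt (le_max_left _ _) (lt_of_lt_of_le hmm (min_le_left _ _))
    have ihs := ih hst
    set K := kmax (Om α β 0) w with hK
    set p := (F α β)^[K] 0 with hp
    have hpI : p ∈ Set.Ico (0:ℝ) 1 := iter_mem_Ico h01 K
    have hcast : (Om α β 0 K : ℤ) = ⌊β * p + α⌋ := Om_cast hα0 hβ h01 K
    have hsR : sb α β w < Rp α β d :=
      lt_of_le_of_lt (le_max_left _ _) (lt_of_lt_of_le hmm (min_le_right _ _))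
    have hfl : ⌊β * p + α⌋ ≤ (d:ℤ) := by
      rw [ihs] at hsR
      rw [Rp, lt_div_iff₀ h0] at hsR
      have h2 : ⌊β * p + α⌋ < (d:ℤ) + 1 := Int.floor_lt.2 (by push_cast; nlinarith)
      omega
    have haKd : Om α β 0 K ≤ d := by omega
    by_cases hd : d = Om α β 0 K
    · have hdz : (d:ℤ) = ⌊β * p + α⌋ := by rw [hd]; exact hcast
      have hdr : (d:ℝ) ≤ β * p + α := by
        have h1 : ((d:ℤ):ℝ) ≤ β * p + α := hdz ▸ Int.floor_le _
        exact_mod_cast h1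
      have hLp : Lp α β d ≤ sb α β w := by
        rw [ihs, Lp, div_le_iff₀ h0]; nlinarith
      have hOm : Om α β p 0 = d := by
        unfold Om
        simp only [Function.iterate_zero_apply]
        omega
      have hF : F α β p = β * p + α - d := F_eq_of_digit hα0 hβ hpI hOm
      have e1 : sb α β (w ++ [d]) = β * p + α - d := by
        rw [sb_concat, max_eq_left hLp, ihs]
      have e2 : (F α β)^[kmax (Om α β 0) (w ++ [d])] 0 = F α β p := by
        rw [kmax_concat_eq hd, ← hK, Function.iterate_succ_apply', hp]
      rw [e1, e2, hF]
    · have hlt : Om α β 0 K < d := lt_of_le_of_ne haKd (fun hh => hd hh.symm)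
      have hpd : β * p + α < (d:ℝ) := by
        have h1 : ⌊β * p + α⌋ < (d:ℤ) := by omega
        have h2 : β * p + α < ((d:ℤ):ℝ) := by
          have h3 : (⌊β * p + α⌋ : ℝ) + 1 ≤ ((d:ℤ):ℝ) := by exact_mod_cast h1
          have := Int.lt_floor_add_one (β * p + α)
          linarith
        exact_mod_cast h2
      have hsL : sb α β w ≤ Lp α β d := by
        rw [ihs, Lp, le_div_iff₀ h0]; nlinarith
      have hkz : kmax (Om α β 0) (w ++ [d]) = 0 := by
        apply kmax_concat_zero
        intro k hta
        obtain ⟨hm, hag, hsum, hdk⟩ := tail_overlap hta (by rw [← hK]; exact hd)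
        rw [← hK] at hm hag hsum
        have := a_self_min hα0 hβ (K - k) k hag
        rw [hsum] at this
        omega
      have e1 : sb α β (w ++ [d]) = β * Lp α β d + α - d := by
        rw [sb_concat, max_eq_right hsL]
      rw [e1, hkz]
      simp only [Function.iterate_zero_apply]
      rw [Lp]; field_simp; ring

lemma t_eq (hα0 : 0 ≤ α) (hβ : 1 < β) {w : List ℕ} (h : sb α β w < tb α β w) :
    tb α β w = (T α β)^[kmax (bseq α β) w] 1 := by
  have h0 : (0:ℝ) < β := lt_trans one_pos hβ
  induction w using List.reverseRecOn with
  | nil => simp [tb_nil, kmax_nil]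
  | append_singleton w d ih =>
    have hmm : max (sb α β w) (Lp α β d) < min (tb α β w) (Rp α β d) := by
      rw [sb_concat, tb_concat] at h
      exact lt_of_mul_lt_mul_left (by linarith) h0.le
    have hst : sb α β w < tb α β w :=
      lt_of_le_of_lt (le_max_left _ _) (lt_of_lt_of_le hmm (min_le_left _ _))
    have iht := ih hst
    set K := kmax (bseq α β) w with hK
    set q := (T α β)^[K] 1 with hq
    have hcast : (bseq α β K : ℤ) = ⌈β * q + α⌉ - 1 := bseq_cast hα0 hβ K
    have hLt : Lp α β d < tb α β w :=
      lt_of_le_of_lt (le_max_right _ _) (lt_of_lt_of_le hmm (min_le_left _ _))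
    have hdq : (d:ℝ) < β * q + α := by
      rw [iht] at hLt
      rw [Lp, div_lt_iff₀ h0] at hLt
      nlinarith
    have hdceil : (d:ℤ) < ⌈β * q + α⌉ := Int.lt_ceil.2 (by exact_mod_cast hdq)
    have hdbK : d ≤ bseq α β K := by omega
    by_cases hd : d = bseq α β K
    · have hdz : (d:ℤ) = ⌈β * q + α⌉ - 1 := by rw [hd]; exact hcast
      have hdz' : ((d:ℝ)) = (⌈β * q + α⌉ : ℝ) - 1 := by
        have : ((d:ℤ):ℝ) = ((⌈β * q + α⌉ - 1 : ℤ):ℝ) := by exact_mod_cast hdz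
        push_cast at this
        exact_mod_cast this
      have hdr : β * q + α ≤ (d:ℝ) + 1 := by
        have h1 := Int.le_ceil (β * q + α)
        linarith
      have hqR : tb α β w ≤ Rp α β d := by
        rw [iht, Rp, le_div_iff₀ h0]; nlinarith
      have hTq : T α β q = β * q + α - d := by
        have h2 : T α β q = β * q + α - ((⌈β * q + α⌉ : ℝ) - 1) := by
          unfold T; push_cast; ring
        rw [h2, ← hdz']
      have e1 : tb α β (w ++ [d]) = β * q + α - d := by
        rw [tb_concat, min_eq_left hqR, iht]
      have e2 : (T α β)^[kmax (bseq α β) (w ++ [d])] 1 = T α β q := by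
        rw [kmax_concat_eq hd, ← hK, Function.iterate_succ_apply', hq]
      rw [e1, e2, hTq]
    · have hlt : d < bseq α β K := lt_of_le_of_ne hdbK hd
      have hqd : (d:ℝ) + 1 < β * q + α := by
        have h1 : (d:ℤ) + 1 ≤ ⌈β * q + α⌉ - 1 := by omega
        have h2 : (⌈β * q + α⌉:ℝ) - 1 < β * q + α := by
          have := Int.ceil_lt_add_one (β * q + α); linarith
        have h3 : ((d:ℝ)) + 1 ≤ (⌈β * q + α⌉:ℝ) - 1 := by exact_mod_cast h1
        linarith
      have hRq : Rp α β d ≤ tb α β w := by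
        rw [iht, Rp, div_le_iff₀ h0]; nlinarith
      have hkz : kmax (bseq α β) (w ++ [d]) = 0 := by
        apply kmax_concat_zero
        intro k hta
        obtain ⟨hm, hag, hsum, hdk⟩ := tail_overlap hta (by rw [← hK]; exact hd)
        rw [← hK] at hm hag hsum
        have := bseq_self_max hα0 hβ (K - k) k hag
        rw [hsum] at this
        omega
      have e1 : tb α β (w ++ [d]) = β * Rp α β d + α - d := by
        rw [tb_concat, min_eq_right hRq]
      rw [e1, hkz]
      simp only [Function.iterate_zero_apply]
      rw [Rp]; field_simp; ring

end Endpoints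

/-- **Extension of words by one letter.** For `0 ≤ α < 1` and `β > 1`, a word
`w ∈ 𝓛` followed by a letter `c ∈ {0,…,ℓ}` is again in `𝓛` if and only if
`a_{k₁(w)+1} ≤ c ≤ b_{k₂(w)+1}`. -/
theorem append_letter_mem_lang_iff (α β : ℝ) (hα0 : 0 ≤ α) (hα1 : α < 1) (hβ : 1 < β)
    (b : ℕ → ℕ) (hb : b ∈ Sig α β) (hbsup : ∀ y ∈ Sig α β, lexLe y b)
    (w : List ℕ) (hw : inLang α β w) (c : ℕ) (hc : c ≤ ell α β) :
    inLang α β (w ++ [c]) ↔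
      (Om α β 0) (kmax (Om α β 0) w) ≤ c ∧ c ≤ b (kmax b w) := by
  obtain rfl : b = bseq α β := b_eq_bseq hα0 hβ hb hbsup
  have h0 : (0:ℝ) < β := lt_trans one_pos hβ
  have h01 : (0:ℝ) ∈ Set.Ico (0:ℝ) 1 := ⟨le_refl _, one_pos⟩
  have hst : sb α β w < tb α β w :=
    (E_nonempty_iff hα0 hβ).1 ((inLang_iff hα0 hβ).1 hw)
  have hs := s_eq hα0 hβ hst
  have ht := t_eq hα0 hβ hst
  set K1 := kmax (Om α β 0) w with hK1
  set K2 := kmax (bseq α β) w with hK2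
  set p := (F α β)^[K1] 0 with hp
  set q := (T α β)^[K2] 1 with hq
  have hcastp : (Om α β 0 K1 : ℤ) = ⌊β * p + α⌋ := Om_cast hα0 hβ h01 K1
  have hcastq : (bseq α β K2 : ℤ) = ⌈β * q + α⌉ - 1 := bseq_cast hα0 hβ K2
  rw [inLang_iff hα0 hβ, E_nonempty_iff hα0 hβ, sb_concat, tb_concat]
  constructor
  · intro hlt
    have hmm : max (sb α β w) (Lp α β c) < min (tb α β w) (Rp α β c) :=
      lt_of_mul_lt_mul_left (by linarith) h0.le
    constructor
    · have h1 : sb α β w < Rp α β c :=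
        lt_of_le_of_lt (le_max_left _ _) (lt_of_lt_of_le hmm (min_le_right _ _))
      rw [hs, Rp, lt_div_iff₀ h0] at h1
      have h2 : ⌊β * p + α⌋ < (c:ℤ) + 1 := Int.floor_lt.2 (by push_cast; nlinarith)
      omega
    · have h1 : Lp α β c < tb α β w :=
        lt_of_le_of_lt (le_max_right _ _) (lt_of_lt_of_le hmm (min_le_left _ _))
      rw [ht, Lp, div_lt_iff₀ h0] at h1
      have h2 : (c:ℤ) < ⌈β * q + α⌉ := Int.lt_ceil.2 (by push_cast; nlinarith)
      omega
  · rintro ⟨h1, h2⟩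
    have hsR : sb α β w < Rp α β c := by
      have h3 : ⌊β * p + α⌋ ≤ (c:ℤ) := by omega
      have h4 : β * p + α < (c:ℝ) + 1 := by
        have h5 : (⌊β * p + α⌋:ℝ) ≤ ((c:ℤ):ℝ) := by exact_mod_cast h3
        have := Int.lt_floor_add_one (β * p + α)
        push_cast at h5
        linarith
      rw [hs, Rp, lt_div_iff₀ h0]
      nlinarith
    have hLt : Lp α β c < tb α β w := by
      have h3 : (c:ℤ) < ⌈β * q + α⌉ := by omega
      have h4 : (c:ℝ) < β * q + α := by exact_mod_cast Int.lt_ceil.1 h3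
      rw [ht, Lp, div_lt_iff₀ h0]
      nlinarith
    have hLR : Lp α β c < Rp α β c := by
      rw [Lp, Rp, div_lt_div_iff₀ h0 h0]
      nlinarith
    have hmm : max (sb α β w) (Lp α β c) < min (tb α β w) (Rp α β c) :=
      max_lt (lt_min hst hsR) (lt_min hLt hLR)
    nlinarith

end IntermediateBeta
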